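/- For all positive integers β and t, (βt−1)! · Σ_{k≥1} q^{tk}(1−q^k)^{−βt} = L(∏_{s=1}^{βt−1}(x − t + s)) in ℚ⟦q⟧, where the product on the right is expanded in ℚ[x] and then evaluated by the umbral map L. -/

import Mathlib

open PowerSeries Finset

noncomputable section

/-- The operator `D = q·d/dq` on `ℚ⟦q⟧`, coefficientwise `aₙ ↦ n·aₙ`. -/
def Dq (F : ℚ⟦X⟧) : ℚ⟦X⟧ := PowerSeries.mk fun n => (n : ℚ) * coeff n F

/-- `E₂(q) = 1 - 24 Σ_{n≥1} σ₁(n) qⁿ`. -/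
def E2 : ℚ⟦X⟧ := PowerSeries.mk fun n => if n = 0 then 1 else -24 * ∑ d ∈ n.divisors, (d : ℚ)

/-- `E₄(q) = 1 + 240 Σ_{n≥1} σ₃(n) qⁿ`. -/
def E4 : ℚ⟦X⟧ := PowerSeries.mk fun n => if n = 0 then 1 else 240 * ∑ d ∈ n.divisors, (d : ℚ) ^ 3

/-- `E₆(q) = 1 - 504 Σ_{n≥1} σ₅(n) qⁿ`. -/
def E6 : ℚ⟦X⟧ := PowerSeries.mk fun n => if n = 0 then 1 else -504 * ∑ d ∈ n.divisors, (d : ℚ) ^ 5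

/-- `∏_{k≥1} (1 - qᵏ)`, defined coefficientwise by truncated finite products
(factors with `k > N` do not affect the `N`-th coefficient). -/
def eulerProd : ℚ⟦X⟧ :=
  PowerSeries.mk fun N => coeff N (∏ k ∈ Finset.Icc 1 N, (1 - X ^ k : ℚ⟦X⟧))

/-- `Σ_{n ∈ ℤ} (-1)ⁿ (6n+1)^{2t} q^{n(3n+1)/2}` (any `n` with `n(3n+1)/2 = N`
satisfies `|n| ≤ N`). -/
def pentagonalSum (t : ℕ) : ℚ⟦X⟧ := PowerSeries.mk fun N =>
  ∑ n ∈ Finset.Icc (-(N : ℤ)) (N : ℤ),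
    if n * (3 * n + 1) = 2 * N then (-1 : ℚ) ^ n * ((6 * n + 1 : ℤ) : ℚ) ^ (2 * t) else 0

/-- `θ₂(q)⁴ = 16 q (Σ_{n≥0} q^{n(n+1)})⁴`. -/
def theta2four : ℚ⟦X⟧ :=
  16 * X * (PowerSeries.mk fun N => ∑ n ∈ Finset.range (N + 1),
    if n * (n + 1) = N then (1 : ℚ) else 0) ^ 4

/-- `θ₃(q) = 1 + 2 Σ_{n≥1} q^{n²}`. -/
def theta3 : ℚ⟦X⟧ :=
  1 + 2 * PowerSeries.mk fun N => ∑ n ∈ Finset.Icc 1 N, if n ^ 2 = N then (1 : ℚ) else 0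

/-- `θ₄(q) = 1 + 2 Σ_{n≥1} (-1)ⁿ q^{n²}`. -/
def theta4 : ℚ⟦X⟧ :=
  1 + 2 * PowerSeries.mk fun N => ∑ n ∈ Finset.Icc 1 N, if n ^ 2 = N then (-1 : ℚ) ^ n else 0

/-- `Θ_{r,s} = θ₂^{4r} θ₃^{4s} + θ₂^{4s} θ₃^{4r}`. -/
def Theta (r s : ℕ) : ℚ⟦X⟧ :=
  theta2four ^ r * theta3 ^ (4 * s) + theta2four ^ s * theta3 ^ (4 * r)

/-- MacMahon's `C_{2t}(q) = Σ_{0<s₁<⋯<s_t} q^{Σ(2sᵢ-1)} ∏ (1-q^{2sᵢ-1})⁻²`,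
defined coefficientwise: tuples with some `sᵢ > N+1` do not affect the `N`-th coefficient. -/
def Cmac (t : ℕ) : ℚ⟦X⟧ := PowerSeries.mk fun N =>
  coeff N (∑ S ∈ (Finset.Icc 1 (N + 1)).powersetCard t,
    ∏ s ∈ S, (X ^ (2 * s - 1) * ((1 - X ^ (2 * s - 1) : ℚ⟦X⟧)⁻¹) ^ 2))

/-- MacMahon's `U_{2t}(q) = Σ_{0<k₁<⋯<k_t} q^{Σkᵢ} ∏ (1-q^{kᵢ})⁻²`,
defined coefficientwise by truncation. -/
def Umac (t : ℕ) : ℚ⟦X⟧ := PowerSeries.mk fun N =>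
  coeff N (∑ S ∈ (Finset.Icc 1 (N + 1)).powersetCard t,
    ∏ k ∈ S, (X ^ k * ((1 - X ^ k : ℚ⟦X⟧)⁻¹) ^ 2))

/-- `U*_{2t}(q) = Σ_{0<k₁≤⋯≤k_t} q^{Σkᵢ} ∏ (1-q^{kᵢ})⁻²`, a sum over multisets of
size `t`, defined coefficientwise by truncation. -/
def UmacStar (t : ℕ) : ℚ⟦X⟧ := PowerSeries.mk fun N =>
  coeff N (∑ m ∈ (Finset.Icc 1 (N + 1)).sym t,
    ((m : Multiset ℕ).map fun k => X ^ k * ((1 - X ^ k : ℚ⟦X⟧)⁻¹) ^ 2).prod)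

/-- `E₂(q²)`, the substitution `q ↦ q²` in `E₂`. -/
def E2sq : ℚ⟦X⟧ := PowerSeries.mk fun n => if 2 ∣ n then coeff (n / 2) E2 else 0

/-- `G₂(q) = 2 E₂(q²) - E₂(q)`. -/
def G2 : ℚ⟦X⟧ := 2 * E2sq - E2

/-- `S_j(q) = Σ_{m≥1} m^j qᵐ/(1-qᵐ)`, defined coefficientwise by truncation. -/
def Sser (j : ℕ) : ℚ⟦X⟧ := PowerSeries.mk fun N =>
  coeff N (∑ m ∈ Finset.Icc 1 N, ((m : ℚ) ^ j) • (X ^ m * (1 - X ^ m : ℚ⟦X⟧)⁻¹))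

/-- The umbral evaluation `L : ℚ[x] → ℚ⟦q⟧`, determined ℚ-linearly by `xᵐ ↦ S_m(q)`. -/
def umbral (p : Polynomial ℚ) : ℚ⟦X⟧ := p.sum fun i a => a • Sser i

/-- `Σ_{k≥1} q^{tk}(1-qᵏ)^{-βt}`, defined coefficientwise by truncation. -/
def Hser (b t : ℕ) : ℚ⟦X⟧ := PowerSeries.mk fun N =>
  coeff N (∑ k ∈ Finset.Icc 1 N, X ^ (t * k) * ((1 - X ^ k : ℚ⟦X⟧)⁻¹) ^ (b * t))

/-- The umbral identity `(βt-1)! Σ_{k≥1} q^{tk}/(1-qᵏ)^{βt} = L(∏_{s=1}^{βt-1}(x-t+s))`. -/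
lemma geo_inv (k : ℕ) (hk : 0 < k) :
    (PowerSeries.mk fun N => if k ∣ N then (1:ℚ) else 0) = (1 - X ^ k : ℚ⟦X⟧)⁻¹ := by
  rw [PowerSeries.eq_inv_iff_mul_eq_one]
  · ext n
    rw [mul_sub, mul_one, map_sub, PowerSeries.coeff_mul_X_pow', coeff_mk, PowerSeries.coeff_one]
    rcases Nat.eq_zero_or_pos n with hn | hn
    · subst hn
      simp [Nat.not_succ_le_zero, hk.ne']
    · rw [if_neg hn.ne']
      by_cases hkn : k ≤ n
      · rw [if_pos hkn, coeff_mk]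
        have : k ∣ n ↔ k ∣ n - k := by
          constructor
          · intro h; exact Nat.dvd_sub h dvd_rfl
          · intro h; have := Nat.dvd_add h (dvd_refl k); rwa [Nat.sub_add_cancel hkn] at this
        by_cases h : k ∣ n
        · rw [if_pos h, if_pos (this.mp h), sub_self]
        · rw [if_neg h, if_neg (fun hh => h (this.mpr hh)), sub_zero]
      · rw [if_neg hkn, if_neg (fun h => hkn (Nat.le_of_dvd hn h)), sub_zero]
  · simp [PowerSeries.constantCoeff_X, map_pow, zero_pow hk.ne']

lemma coeff_geo_inv (k N : ℕ) (hk : 0 < k) :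
    coeff N ((1 - X ^ k : ℚ⟦X⟧)⁻¹) = if k ∣ N then 1 else 0 := by
  rw [← geo_inv k hk, coeff_mk]

lemma sum_mult (k M : ℕ) (hk : 0 < k) (f : ℕ → ℚ) (hf : ∀ i, ¬ k ∣ i → f i = 0) :
    ∑ i ∈ range (k * M + 1), f i = ∑ a ∈ range (M + 1), f (k * a) := by
  rw [← Finset.sum_filter_of_ne (p := fun i => k ∣ i)
    (fun i _ h => by by_contra hd; exact h (hf i hd))]
  refine Finset.sum_nbij' (fun i => i / k) (fun a => k * a) ?_ ?_ ?_ ?_ ?_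
  · intro i hi
    simp only [Finset.mem_filter, Finset.mem_range] at hi ⊢
    have := hi.1
    exact Nat.lt_succ_of_le (Nat.div_le_div_right (Nat.lt_succ_iff.mp this) |>.trans
      (by rw [Nat.mul_div_cancel_left _ hk] ))
  · intro a ha
    simp only [Finset.mem_range] at ha
    simp only [Finset.mem_filter, Finset.mem_range]
    exact ⟨by nlinarith [Nat.lt_succ_iff.mp ha], Dvd.intro a rfl⟩
  · intro i hi
    simp only [Finset.mem_filter] at hi
    exact Nat.mul_div_cancel' hi.2
  · intro a _
    exact Nat.mul_div_cancel_left a hk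
  · intro i hi
    simp only [Finset.mem_filter] at hi
    rw [Nat.mul_div_cancel' hi.2]

lemma hockey (M n : ℕ) : ∑ a ∈ range (M + 1), ((a + n).choose n) = (M + n + 1).choose (n + 1) := by
  induction M with
  | zero => simp
  | succ M ih =>
    rw [Finset.sum_range_succ, ih, show M + 1 + n + 1 = (M + n + 1) + 1 by omega,
      Nat.choose_succ_succ (M + n + 1) n, Nat.add_comm, show M + 1 + n = M + n + 1 by omega]

lemma coeff_geo_inv_pow (k n N : ℕ) (hk : 0 < k) :
    coeff N (((1 - X ^ k : ℚ⟦X⟧)⁻¹) ^ (n + 1)) =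
      if k ∣ N then ((N / k + n).choose n : ℚ) else 0 := by
  induction n generalizing N with
  | zero => rw [pow_one, coeff_geo_inv k N hk]; simp
  | succ n ih =>
    rw [pow_succ, PowerSeries.coeff_mul, Finset.Nat.sum_antidiagonal_eq_sum_range_succ_mk]
    simp only [ih, coeff_geo_inv _ _ hk]
    by_cases hN : k ∣ N
    · obtain ⟨M, rfl⟩ := hN
      rw [if_pos (Dvd.intro M rfl)]
      rw [sum_mult k M hk _ (fun i hi => by rw [if_neg hi, zero_mul])]
      have step : ∀ a ∈ range (M + 1),
          (if k ∣ k * a then ((k * a / k + n).choose n : ℚ) else 0) *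
            (if k ∣ k * M - k * a then 1 else 0) = ((a + n).choose n : ℚ) := by
        intro a ha
        rw [if_pos (Dvd.intro a rfl), if_pos (Nat.dvd_sub (Dvd.intro M rfl) (Dvd.intro a rfl)),
          Nat.mul_div_cancel_left _ hk, mul_one]
      rw [Finset.sum_congr rfl step, ← Nat.cast_sum, hockey,
        Nat.mul_div_cancel_left _ hk]
      norm_num [Nat.add_assoc]
    · rw [if_neg hN]
      refine Finset.sum_eq_zero fun i hi => ?_
      simp only [Finset.mem_range, Nat.lt_succ_iff] at hi
      by_cases h1 : k ∣ i
      · by_cases h2 : k ∣ N - i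
        · exact absurd (by have := Nat.dvd_add h1 h2; rwa [Nat.add_sub_cancel' hi] at this) hN
        · rw [if_neg h2, mul_zero]
      · rw [if_neg h1, zero_mul]

lemma divisor_sum_form (N : ℕ) (f : ℕ → ℚ) :
    ∑ k ∈ Icc 1 N, (if k ∣ N then f k else 0) = ∑ k ∈ N.divisors, f k := by
  rw [Nat.divisors, Finset.sum_filter, Finset.Ico_add_one_right_eq_Icc]

lemma coeff_Hser (b t N : ℕ) (hb : 0 < b) (ht : 0 < t) :
    coeff N (Hser b t) = ∑ d ∈ N.divisors,
      (if t ≤ N / d then (((N / d - t + (b * t - 1)).choose (b * t - 1) : ℕ) : ℚ) else 0) := by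
  set L := b * t - 1 with hL
  have hbt : b * t = L + 1 := by
    have : 1 ≤ b * t := Nat.one_le_iff_ne_zero.mpr (Nat.mul_ne_zero hb.ne' ht.ne')
    omega
  rw [Hser, coeff_mk, map_sum, ← divisor_sum_form N
    (fun k => if t ≤ N / k then (((N / k - t + L).choose L : ℕ) : ℚ) else 0)]
  refine Finset.sum_congr rfl fun k hk => ?_
  simp only [Finset.mem_Icc] at hk
  have hkpos : 0 < k := hk.1
  rw [hbt, PowerSeries.coeff_X_pow_mul', coeff_geo_inv_pow k L _ hkpos]
  by_cases hdvd : k ∣ N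
  · obtain ⟨M, rfl⟩ := hdvd
    rw [if_pos (Dvd.intro M rfl), Nat.mul_div_cancel_left _ hkpos]
    by_cases htM : t ≤ M
    · rw [if_pos (by nlinarith : t * k ≤ k * M), if_pos htM,
        if_pos (by rw [show k * M - t * k = k * (M - t) by rw [Nat.mul_sub, Nat.mul_comm t k]]; exact Dvd.intro _ rfl),
        show (k * M - t * k) / k = M - t by
          rw [show k * M - t * k = k * (M - t) by rw [Nat.mul_sub, Nat.mul_comm t k], Nat.mul_div_cancel_left _ hkpos]]
    · rw [if_neg htM, if_neg (by nlinarith : ¬ t * k ≤ k * M)]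
  · rw [if_neg hdvd]
    by_cases h1 : t * k ≤ N
    · rw [if_pos h1, if_neg (fun h2 => hdvd (by
        have := Nat.dvd_add h2 (dvd_mul_left k t)
        rwa [Nat.sub_add_cancel h1] at this))]
    · rw [if_neg h1]

lemma coeff_Sser (j N : ℕ) :
    coeff N (Sser j) = ∑ m ∈ N.divisors, (m : ℚ) ^ j := by
  rw [Sser, coeff_mk, map_sum, ← divisor_sum_form N (fun m => (m : ℚ) ^ j)]
  refine Finset.sum_congr rfl fun m hm => ?_
  simp only [Finset.mem_Icc] at hm
  have hmpos : 0 < m := hm.1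
  rw [map_smul, smul_eq_mul, PowerSeries.coeff_X_pow_mul', if_pos hm.2,
    coeff_geo_inv m _ hmpos]
  have : m ∣ N - m ↔ m ∣ N := by
    constructor
    · intro h; have := Nat.dvd_add h (dvd_refl m); rwa [Nat.sub_add_cancel hm.2] at this
    · intro h; exact Nat.dvd_sub h dvd_rfl
  by_cases h : m ∣ N
  · rw [if_pos (this.mpr h), if_pos h, mul_one]
  · rw [if_neg (fun hh => h (this.mp hh)), if_neg h, mul_zero]

lemma coeff_umbral (p : Polynomial ℚ) (N : ℕ) :
    coeff N (umbral p) = ∑ m ∈ N.divisors, p.eval (m : ℚ) := by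
  rw [umbral, Polynomial.sum_def, map_sum]
  simp only [map_smul, smul_eq_mul, coeff_Sser, Finset.mul_sum]
  rw [Finset.sum_comm]
  refine Finset.sum_congr rfl fun m _ => ?_
  rw [Polynomial.eval_eq_sum, Polynomial.sum_def]

lemma prod_asc (a L : ℕ) : ∏ s ∈ Icc 1 L, (a + s) = L.factorial * (a + L).choose L := by
  have h : ∏ s ∈ Icc 1 L, (a + s) = (a + 1).ascFactorial L := by
    induction L with
    | zero => simp
    | succ L ih =>
      rw [Finset.prod_Icc_succ_top (by omega : 1 ≤ L + 1), ih, Nat.ascFactorial_succ]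
      ring
  rw [h, Nat.ascFactorial_eq_factorial_mul_choose]

lemma eval_factor_prod (m t L : ℕ) (hm : 0 < m) (hcond : m < t → t - m ≤ L) :
    ∏ s ∈ Icc 1 L, ((m : ℚ) + ((s : ℚ) - (t : ℚ))) =
      if t ≤ m then ((L.factorial * (m - t + L).choose L : ℕ) : ℚ) else 0 := by
  by_cases htm : t ≤ m
  · rw [if_pos htm]
    have step : ∀ s ∈ Icc 1 L, ((m : ℚ) + ((s : ℚ) - (t : ℚ))) = ((m - t + s : ℕ) : ℚ) := by
      intro s _
      push_cast [Nat.cast_sub htm]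
      ring
    rw [Finset.prod_congr rfl step, ← Nat.cast_prod, prod_asc (m - t) L]
  · rw [if_neg htm]
    push_neg at htm
    refine Finset.prod_eq_zero (i := t - m) ?_ ?_
    · simp only [Finset.mem_Icc]
      exact ⟨by omega, hcond htm⟩
    · push_cast [Nat.cast_sub htm.le]
      ring

theorem umbral_identity (b t : ℕ) (hb : 0 < b) (ht : 0 < t) :
    (((b * t - 1).factorial : ℚ)) • Hser b t =
      umbral (∏ s ∈ Finset.Icc 1 (b * t - 1),
        (Polynomial.X + Polynomial.C ((s : ℚ) - (t : ℚ)))) := by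
  set L := b * t - 1 with hL
  have htL : t ≤ b * t := Nat.le_mul_of_pos_left t hb
  ext N
  rw [map_smul, smul_eq_mul, coeff_Hser b t N hb ht, coeff_umbral, ← hL,
    Nat.sum_div_divisors N (fun d => if t ≤ d then (((d - t + L).choose L : ℕ) : ℚ) else 0),
    Finset.mul_sum]
  refine Finset.sum_congr rfl fun m hm => ?_
  have hm1 : 0 < m := Nat.pos_of_mem_divisors hm
  have heval : Polynomial.eval (m : ℚ) (∏ s ∈ Finset.Icc 1 L,
      (Polynomial.X + Polynomial.C ((s : ℚ) - (t : ℚ)))) =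
      ∏ s ∈ Icc 1 L, ((m : ℚ) + ((s : ℚ) - (t : ℚ))) := by
    rw [Polynomial.eval_prod]
    exact Finset.prod_congr rfl fun s _ => by
      rw [Polynomial.eval_add, Polynomial.eval_X, Polynomial.eval_C]
  rw [heval, eval_factor_prod m t L hm1 (fun h => by omega)]
  by_cases htm : t ≤ m
  · rw [if_pos htm, if_pos htm]
    push_cast
    ring
  · rw [if_neg htm, if_neg htm, mul_zero]
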